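/- Let C ↠ B be an A-Galois coextension with canonical entwining map ψ. Then C ∈ M_A^C(ψ) with structure maps Δ and μ_C, i.e. Δ ∘ μ_C = (μ_C ⊗ C) ∘ (C ⊗ ψ) ∘ (Δ ⊗ A). Moreover ψ is the unique entwining map with this property: any entwining map ψ̃ with Δ ∘ μ_C = (μ_C ⊗ C)∘(C ⊗ ψ̃)∘(Δ ⊗ A) equals ψ. -/

import Mathlib

open TensorProduct LinearMap Coalgebra

variable {k A C : Type*} [Field k] [Ring A] [Algebra k A]
  [AddCommGroup C] [Module k C] [Coalgebra k C]

/-- `μ : C ⊗ A → C` is a unital, associative right `A`-action on `C`. -/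
def IsAction (μ : C ⊗[k] A →ₗ[k] C) : Prop :=
  (∀ c : C, μ (c ⊗ₜ[k] (1 : A)) = c)
  ∧ (∀ (c : C) (a a' : A), μ (μ (c ⊗ₜ[k] a) ⊗ₜ[k] a') = μ (c ⊗ₜ[k] (a * a')))

/-- Action by a fixed element `a ∈ A`: `c ↦ μ(c ⊗ a)`. -/
noncomputable def actBy (μ : C ⊗[k] A →ₗ[k] C) (a : A) : C →ₗ[k] C :=
  μ ∘ₗ (TensorProduct.mk k C A).flip a

/-- The subspace `I` of Lemma 3.2: the span of all
`μ(c,a)₍₁₎ α(μ(c,a)₍₂₎) − c₍₁₎ α(μ(c₍₂₎,a))` for `a ∈ A`, `c ∈ C`, `α ∈ Hom(C,k)`. -/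
noncomputable def coidealI (μ : C ⊗[k] A →ₗ[k] C) : Submodule k C :=
  Submodule.span k {x : C | ∃ (a : A) (c : C) (α : C →ₗ[k] k), x =
    TensorProduct.rid k C (α.lTensor C (comul (R := k) (μ (c ⊗ₜ[k] a))))
      - TensorProduct.rid k C ((α ∘ₗ actBy μ a).lTensor C (comul (R := k) c))}

/-- `(π ⊗ C) ∘ Δ : C → B ⊗ C`, where `B = C / I` and `π` the quotient map. -/
noncomputable def coactL (μ : C ⊗[k] A →ₗ[k] C) :
    C →ₗ[k] (C ⧸ coidealI μ) ⊗[k] C :=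
  (coidealI μ).mkQ.rTensor C ∘ₗ comul (R := k)

/-- `(C ⊗ π) ∘ Δ : C → C ⊗ B`. -/
noncomputable def coactR (μ : C ⊗[k] A →ₗ[k] C) :
    C →ₗ[k] C ⊗[k] (C ⧸ coidealI μ) :=
  (coidealI μ).mkQ.lTensor C ∘ₗ comul (R := k)

/-- The coaction-equalising map `C ⊗ C → C ⊗ B ⊗ C` whose kernel is the
cotensor product `C □_B C`. -/
noncomputable def cotensorEq (μ : C ⊗[k] A →ₗ[k] C) :
    C ⊗[k] C →ₗ[k] C ⊗[k] ((C ⧸ coidealI μ) ⊗[k] C) :=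
  ((TensorProduct.assoc k C (C ⧸ coidealI μ) C).toLinearMap ∘ₗ (coactR μ).rTensor C)
    - (coactL μ).lTensor C

/-- The cotensor product `C □_B C ⊆ C ⊗ C`. -/
noncomputable def cotensor (μ : C ⊗[k] A →ₗ[k] C) : Submodule k (C ⊗[k] C) :=
  LinearMap.ker (cotensorEq μ)

/-- The canonical map `cocan = (C ⊗ μ) ∘ (Δ ⊗ A) : C ⊗ A → C ⊗ C`
(taking values in `C □_B C`). -/
noncomputable def cocanF (μ : C ⊗[k] A →ₗ[k] C) : C ⊗[k] A →ₗ[k] C ⊗[k] C :=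
  μ.lTensor C ∘ₗ (TensorProduct.assoc k C C A).toLinearMap
    ∘ₗ (comul (R := k) (A := C)).rTensor A

/-- `σ` is an inverse of `cocan` regarded as a map onto `C □_B C`, i.e. the
coextension `C ↠ B` is `A`-Galois. -/
def IsCocanInverse (μ : C ⊗[k] A →ₗ[k] C) (σ : C ⊗[k] C →ₗ[k] C ⊗[k] A) : Prop :=
  (LinearMap.range (cocanF μ) ≤ cotensor μ)
  ∧ (σ ∘ₗ cocanF μ = LinearMap.id)
  ∧ (∀ x ∈ cotensor μ, cocanF μ (σ x) = x)

/-- The cotranslation map `τ̌ = (ε ⊗ A) ∘ cocan⁻¹ : C □_B C → A`, expressed via a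
linear extension `σ` of `cocan⁻¹`. -/
noncomputable def cotrans (σ : C ⊗[k] C →ₗ[k] C ⊗[k] A) : C ⊗[k] C →ₗ[k] A :=
  (TensorProduct.lid k A).toLinearMap ∘ₗ (counit (R := k) (A := C)).rTensor A ∘ₗ σ

/-- The four axioms of an entwining structure `(A, C, ψ)`. -/
def IsEntwining (ψ : C ⊗[k] A →ₗ[k] A ⊗[k] C) : Prop :=
  (ψ ∘ₗ (LinearMap.mul' k A).lTensor C ∘ₗ (TensorProduct.assoc k C A A).toLinearMap
      = (LinearMap.mul' k A).rTensor C ∘ₗ (TensorProduct.assoc k A A C).symm.toLinearMap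
        ∘ₗ ψ.lTensor A ∘ₗ (TensorProduct.assoc k A C A).toLinearMap ∘ₗ ψ.rTensor A)
  ∧ (∀ c : C, ψ (c ⊗ₜ[k] (1 : A)) = (1 : A) ⊗ₜ[k] c)
  ∧ ((comul (R := k) (A := C)).lTensor A ∘ₗ ψ
      = (TensorProduct.assoc k A C C).toLinearMap ∘ₗ ψ.rTensor C
        ∘ₗ (TensorProduct.assoc k C A C).symm.toLinearMap ∘ₗ ψ.lTensor C
        ∘ₗ (TensorProduct.assoc k C C A).toLinearMap ∘ₗ (comul (R := k) (A := C)).rTensor A)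
  ∧ ((TensorProduct.rid k A).toLinearMap ∘ₗ (counit (R := k) (A := C)).lTensor A ∘ₗ ψ
      = (TensorProduct.lid k A).toLinearMap ∘ₗ (counit (R := k) (A := C)).rTensor A)

/-- The canonical entwining map `ψ = (τ̌ ⊗ C) ∘ (C ⊗ Δ) ∘ cocan` of an
`A`-Galois coextension. -/
noncomputable def cocanPsi (μ : C ⊗[k] A →ₗ[k] C) (σ : C ⊗[k] C →ₗ[k] C ⊗[k] A) :
    C ⊗[k] A →ₗ[k] A ⊗[k] C :=
  (cotrans σ).rTensor C ∘ₗ (TensorProduct.assoc k C C C).symm.toLinearMap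
    ∘ₗ (comul (R := k) (A := C)).lTensor C ∘ₗ cocanF μ

namespace GX

noncomputable def DD (M : Type*) [AddCommGroup M] [Module k M] :
    C ⊗[k] M →ₗ[k] C ⊗[k] (C ⊗[k] M) :=
  (TensorProduct.assoc k C C M).toLinearMap ∘ₗ (comul (R := k) (A := C)).rTensor M

noncomputable def epsL (M : Type*) [AddCommGroup M] [Module k M] :
    C ⊗[k] M →ₗ[k] M :=
  (TensorProduct.lid k M).toLinearMap ∘ₗ (counit (R := k) (A := C)).rTensor M

variable {M N : Type*} [AddCommGroup M] [Module k M] [AddCommGroup N] [Module k N]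

lemma DD_tmul (c : C) (m : M) (r : Coalgebra.Repr k c (C × C)) :
    DD M (c ⊗ₜ[k] m) = ∑ i ∈ r.index, r.left i ⊗ₜ[k] (r.right i ⊗ₜ[k] m) := by
  simp only [DD, comp_apply, coe_comp, LinearEquiv.coe_coe, Function.comp_apply,
    rTensor_tmul]
  rw [← r.eq]
  simp [sum_tmul]

lemma epsL_tmul (c : C) (m : M) : epsL M (c ⊗ₜ[k] m) = counit (R := k) c • m := by
  simp [epsL]

lemma counit_smul_left (c : C) (r : Coalgebra.Repr k c (C × C)) :
    ∑ i ∈ r.index, counit (R := k) (r.left i) • r.right i = c := by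
  have := congrArg (TensorProduct.lid k C) (Coalgebra.sum_counit_tmul_eq (R := k) r)
  simp only [map_sum, TensorProduct.lid_tmul] at this
  simpa using this

lemma counit_smul_right (c : C) (r : Coalgebra.Repr k c (C × C)) :
    ∑ i ∈ r.index, counit (R := k) (r.right i) • r.left i = c := by
  have := congrArg (TensorProduct.rid k C) (Coalgebra.sum_tmul_counit_eq (R := k) r)
  simp only [map_sum, TensorProduct.rid_tmul] at this
  simpa using this

lemma counit_DD : (epsL M).lTensor C ∘ₗ DD M = LinearMap.id (R := k) (M := C ⊗[k] M) := by
  apply TensorProduct.ext'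
  intro c m
  simp only [comp_apply, DD_tmul c m (ℛ k c), map_sum, lTensor_tmul, epsL_tmul, id_apply,
    tmul_smul, smul_tmul']
  rw [← sum_tmul, counit_smul_right c (ℛ k c)]

/-- counit against the second factor of `DD`. -/
lemma DD_counit : (epsL (C ⊗[k] M) ∘ₗ DD M) = LinearMap.id (R := k) (M := C ⊗[k] M) := by
  apply TensorProduct.ext'
  intro c m
  simp only [comp_apply, DD_tmul c m (ℛ k c), map_sum, epsL_tmul, id_apply, smul_tmul']
  rw [← sum_tmul, counit_smul_left c (ℛ k c)]

end GX

namespace GX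
variable {M N : Type*} [AddCommGroup M] [Module k M] [AddCommGroup N] [Module k N]

lemma cocanF_eq (μ : C ⊗[k] A →ₗ[k] C) : cocanF μ = μ.lTensor C ∘ₗ DD A := rfl

lemma cocanF_tmul (μ : C ⊗[k] A →ₗ[k] C) (c : C) (a : A) (r : Coalgebra.Repr k c (C × C)) :
    cocanF μ (c ⊗ₜ[k] a) = ∑ i ∈ r.index, r.left i ⊗ₜ[k] μ (r.right i ⊗ₜ[k] a) := by
  rw [cocanF_eq, comp_apply, DD_tmul c a r, map_sum]
  simp [lTensor_tmul]

lemma epsL_cocanF (μ : C ⊗[k] A →ₗ[k] C) : epsL C ∘ₗ cocanF μ = μ := by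
  apply TensorProduct.ext'
  intro c a
  simp only [comp_apply, cocanF_tmul μ c a (ℛ k c), map_sum, epsL_tmul]
  have : ∑ x ∈ (ℛ k c).index, counit (R := k) ((ℛ k c).left x) • μ ((ℛ k c).right x ⊗ₜ[k] a)
      = μ ((∑ x ∈ (ℛ k c).index, counit (R := k) ((ℛ k c).left x) • (ℛ k c).right x) ⊗ₜ[k] a) := by
    rw [sum_tmul, map_sum]
    simp [← smul_tmul']
  rw [this, counit_smul_left c (ℛ k c)]

end GX

namespace GX

lemma actBy_apply (μ : C ⊗[k] A →ₗ[k] C) (a : A) (c : C) : actBy μ a c = μ (c ⊗ₜ[k] a) := rfl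

/-- left colinearity of the canonical map. -/
lemma cocanF_colinear (μ : C ⊗[k] A →ₗ[k] C) :
    (cocanF μ).lTensor C ∘ₗ DD A = DD C ∘ₗ cocanF μ := by
  apply TensorProduct.ext'
  intro c a
  set r := ℛ k c with hr
  rw [comp_apply, comp_apply, DD_tmul c a r, map_sum, cocanF_tmul μ c a r, map_sum]
  have hL : ∀ i ∈ r.index, (cocanF μ).lTensor C (r.left i ⊗ₜ[k] (r.right i ⊗ₜ[k] a)) =
      ∑ j ∈ (ℛ k (r.right i)).index,
        LinearMap.id (R := k) (r.left i) ⊗ₜ[k] (LinearMap.id (R := k) ((ℛ k (r.right i)).left j)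
          ⊗ₜ[k] actBy μ a ((ℛ k (r.right i)).right j)) := by
    intro i _
    rw [lTensor_tmul, cocanF_tmul μ _ a (ℛ k (r.right i)), tmul_sum]
    simp [actBy_apply]
  have hR : ∀ i ∈ r.index, DD C (r.left i ⊗ₜ[k] μ (r.right i ⊗ₜ[k] a)) =
      ∑ j ∈ (ℛ k (r.left i)).index,
        LinearMap.id (R := k) ((ℛ k (r.left i)).left j) ⊗ₜ[k]
          (LinearMap.id (R := k) ((ℛ k (r.left i)).right j) ⊗ₜ[k] actBy μ a (r.right i)) := by
    intro i _
    rw [DD_tmul _ _ (ℛ k (r.left i))]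
    simp [actBy_apply]
  rw [Finset.sum_congr rfl hL, Finset.sum_congr rfl hR]
  exact Coalgebra.sum_map_tmul_tmul_eq (LinearMap.id) (LinearMap.id) (actBy μ a) c
    (repr := r) (a₁ := fun i => ℛ k (r.left i)) (a₂ := fun i => ℛ k (r.right i))

end GX

namespace GX

lemma coactL_tmul (μ : C ⊗[k] A →ₗ[k] C) (v : C) (r : Coalgebra.Repr k v (C × C)) :
    coactL μ v = ∑ i ∈ r.index, (coidealI μ).mkQ (r.left i) ⊗ₜ[k] r.right i := by
  rw [coactL, comp_apply, ← r.eq, map_sum]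
  simp

lemma coactR_tmul (μ : C ⊗[k] A →ₗ[k] C) (u : C) (r : Coalgebra.Repr k u (C × C)) :
    coactR μ u = ∑ i ∈ r.index, r.left i ⊗ₜ[k] (coidealI μ).mkQ (r.right i) := by
  rw [coactR, comp_apply, ← r.eq, map_sum]
  simp

lemma cotensorEq_tmul (μ : C ⊗[k] A →ₗ[k] C) (u v : C)
    (ru : Coalgebra.Repr k u (C × C)) (rv : Coalgebra.Repr k v (C × C)) :
    cotensorEq μ (u ⊗ₜ[k] v) =
      (∑ i ∈ ru.index, ru.left i ⊗ₜ[k] ((coidealI μ).mkQ (ru.right i) ⊗ₜ[k] v))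
      - ∑ j ∈ rv.index, u ⊗ₜ[k] ((coidealI μ).mkQ (rv.left j) ⊗ₜ[k] rv.right j) := by
  rw [cotensorEq, LinearMap.sub_apply, comp_apply, rTensor_tmul, coactR_tmul μ u ru,
    lTensor_tmul, coactL_tmul μ v rv]
  simp [sum_tmul, tmul_sum, map_sum]

end GX

namespace GX

lemma cotensorEq_compat (μ : C ⊗[k] A →ₗ[k] C) :
    (cotensorEq μ).rTensor C ∘ₗ (TensorProduct.assoc k C C C).symm.toLinearMap
        ∘ₗ (comul (R := k) (A := C)).lTensor C
      = ((TensorProduct.assoc k C ((C ⧸ coidealI μ) ⊗[k] C) C).symm.toLinearMap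
          ∘ₗ ((TensorProduct.assoc k (C ⧸ coidealI μ) C C).symm.toLinearMap.lTensor C)
          ∘ₗ (((comul (R := k) (A := C)).lTensor (C ⧸ coidealI μ)).lTensor C))
        ∘ₗ cotensorEq μ := by
  apply TensorProduct.ext'
  intro u v
  set ru := ℛ k u with hru
  set rv := ℛ k v with hrv
  -- LHS
  have hLHS : ((cotensorEq μ).rTensor C ∘ₗ (TensorProduct.assoc k C C C).symm.toLinearMap
      ∘ₗ (comul (R := k) (A := C)).lTensor C) (u ⊗ₜ[k] v)
      = (∑ j ∈ rv.index, ∑ i ∈ ru.index,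
          (ru.left i ⊗ₜ[k] ((coidealI μ).mkQ (ru.right i) ⊗ₜ[k] rv.left j)) ⊗ₜ[k] rv.right j)
        - ∑ j ∈ rv.index, ∑ q ∈ (ℛ k (rv.left j)).index,
          (u ⊗ₜ[k] ((coidealI μ).mkQ ((ℛ k (rv.left j)).left q) ⊗ₜ[k] (ℛ k (rv.left j)).right q))
            ⊗ₜ[k] rv.right j := by
    rw [comp_apply, comp_apply, lTensor_tmul, ← rv.eq, tmul_sum, map_sum, map_sum]
    have h0 : ∀ j ∈ rv.index,
        (cotensorEq μ).rTensor C
          ((TensorProduct.assoc k C C C).symm.toLinearMap (u ⊗ₜ[k] (rv.left j ⊗ₜ[k] rv.right j)))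
        = (∑ i ∈ ru.index,
            (ru.left i ⊗ₜ[k] ((coidealI μ).mkQ (ru.right i) ⊗ₜ[k] rv.left j)) ⊗ₜ[k] rv.right j)
          - ∑ q ∈ (ℛ k (rv.left j)).index,
            (u ⊗ₜ[k] ((coidealI μ).mkQ ((ℛ k (rv.left j)).left q)
              ⊗ₜ[k] (ℛ k (rv.left j)).right q)) ⊗ₜ[k] rv.right j := by
      intro j _
      simp only [LinearEquiv.coe_toLinearMap, TensorProduct.assoc_symm_tmul]
      rw [rTensor_tmul, cotensorEq_tmul μ u (rv.left j) ru (ℛ k (rv.left j)), sub_tmul,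
        sum_tmul, sum_tmul]
    rw [Finset.sum_congr rfl h0]
    exact Finset.sum_sub_distrib (G := (C ⊗[k] ((C ⧸ coidealI μ) ⊗[k] C)) ⊗[k] C) _ _
  rw [hLHS]
  -- RHS
  rw [comp_apply, cotensorEq_tmul μ u v ru rv, map_sub]
  simp only [map_sum, comp_apply, lTensor_tmul, LinearEquiv.coe_coe, LinearEquiv.coe_toLinearMap]
  have hR1 : ∀ i ∈ ru.index,
      (TensorProduct.assoc k C ((C ⧸ coidealI μ) ⊗[k] C) C).symm
        (ru.left i ⊗ₜ[k] (TensorProduct.assoc k (C ⧸ coidealI μ) C C).symm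
          ((coidealI μ).mkQ (ru.right i) ⊗ₜ[k] comul (R := k) v))
      = ∑ j ∈ rv.index, (ru.left i ⊗ₜ[k] ((coidealI μ).mkQ (ru.right i) ⊗ₜ[k] rv.left j))
          ⊗ₜ[k] rv.right j := by
    intro i _
    rw [← rv.eq]
    simp [tmul_sum, map_sum]
  have hR2 : ∀ j ∈ rv.index,
      (TensorProduct.assoc k C ((C ⧸ coidealI μ) ⊗[k] C) C).symm
        (u ⊗ₜ[k] (TensorProduct.assoc k (C ⧸ coidealI μ) C C).symm
          ((coidealI μ).mkQ (rv.left j) ⊗ₜ[k] comul (R := k) (rv.right j)))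
      = ∑ q ∈ (ℛ k (rv.right j)).index,
          (u ⊗ₜ[k] ((coidealI μ).mkQ (rv.left j) ⊗ₜ[k] (ℛ k (rv.right j)).left q))
            ⊗ₜ[k] (ℛ k (rv.right j)).right q := by
    intro j _
    rw [← (ℛ k (rv.right j)).eq]
    simp [tmul_sum, map_sum]
  rw [Finset.sum_congr rfl hR1, Finset.sum_congr rfl hR2]
  congr 1
  · exact Finset.sum_comm
  -- coassociativity part
  have key := Coalgebra.sum_tmul_tmul_eq (R := k) rv
    (fun j => ℛ k (rv.left j)) (fun j => ℛ k (rv.right j))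
  set Θ : C ⊗[k] (C ⊗[k] C) →ₗ[k] (C ⊗[k] ((C ⧸ coidealI μ) ⊗[k] C)) ⊗[k] C :=
    ((TensorProduct.mk k C ((C ⧸ coidealI μ) ⊗[k] C) u).rTensor C)
      ∘ₗ (TensorProduct.assoc k (C ⧸ coidealI μ) C C).symm.toLinearMap
      ∘ₗ ((coidealI μ).mkQ.rTensor (C ⊗[k] C)) with hΘ
  have key2 := congrArg Θ key
  simp only [map_sum, hΘ, comp_apply, rTensor_tmul, LinearEquiv.coe_coe,
    LinearEquiv.coe_toLinearMap, TensorProduct.assoc_symm_tmul, TensorProduct.mk_apply] at key2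
  exact key2

end GX

namespace GX

lemma counit_assoc_comul :
    (epsL C).rTensor C ∘ₗ (TensorProduct.assoc k C C C).symm.toLinearMap
        ∘ₗ (comul (R := k) (A := C)).lTensor C
      = comul (R := k) (A := C) ∘ₗ epsL C := by
  apply TensorProduct.ext'
  intro u v
  set rv := ℛ k v with hrv
  simp only [comp_apply, lTensor_tmul, epsL_tmul, map_smul]
  rw [← rv.eq, tmul_sum, map_sum, map_sum]
  simp only [LinearEquiv.coe_toLinearMap, TensorProduct.assoc_symm_tmul, rTensor_tmul,
    epsL_tmul, smul_tmul']
  rw [Finset.smul_sum]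
  simp [smul_tmul']

end GX

namespace GX

/-- the "ψ∘σ"-shaped processing map. -/
noncomputable def PP (σ : C ⊗[k] C →ₗ[k] C ⊗[k] A) : C ⊗[k] C →ₗ[k] A ⊗[k] C :=
  (cotrans σ).rTensor C ∘ₗ (TensorProduct.assoc k C C C).symm.toLinearMap
    ∘ₗ (comul (R := k) (A := C)).lTensor C

lemma cocanPsi_eq (μ : C ⊗[k] A →ₗ[k] C) (σ : C ⊗[k] C →ₗ[k] C ⊗[k] A) :
    cocanPsi μ σ = PP σ ∘ₗ cocanF μ := rfl

lemma PP_tmul (σ : C ⊗[k] C →ₗ[k] C ⊗[k] A) (x v : C) (rv : Coalgebra.Repr k v (C × C)) :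
    PP σ (x ⊗ₜ[k] v) = ∑ j ∈ rv.index, cotrans σ (x ⊗ₜ[k] rv.left j) ⊗ₜ[k] rv.right j := by
  rw [PP, comp_apply, comp_apply, lTensor_tmul, ← rv.eq, tmul_sum, map_sum, map_sum]
  simp

lemma B1 (μ : C ⊗[k] A →ₗ[k] C) (σ : C ⊗[k] C →ₗ[k] C ⊗[k] A) :
    μ.rTensor C ∘ₗ (TensorProduct.assoc k C A C).symm.toLinearMap ∘ₗ (PP σ).lTensor C ∘ₗ DD C
      = (μ ∘ₗ (cotrans σ).lTensor C).rTensor C ∘ₗ (DD C).rTensor C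
          ∘ₗ (TensorProduct.assoc k C C C).symm.toLinearMap
          ∘ₗ (comul (R := k) (A := C)).lTensor C := by
  apply TensorProduct.ext'
  intro u v
  set ru := ℛ k u with hru
  set rv := ℛ k v with hrv
  -- LHS
  have hL : (μ.rTensor C ∘ₗ (TensorProduct.assoc k C A C).symm.toLinearMap
        ∘ₗ (PP σ).lTensor C ∘ₗ DD C) (u ⊗ₜ[k] v)
      = ∑ i ∈ ru.index, ∑ j ∈ rv.index,
          μ (ru.left i ⊗ₜ[k] cotrans σ (ru.right i ⊗ₜ[k] rv.left j)) ⊗ₜ[k] rv.right j := by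
    rw [comp_apply, comp_apply, comp_apply, DD_tmul u v ru, map_sum, map_sum, map_sum]
    congr 1
    ext i
    rw [lTensor_tmul, PP_tmul σ _ v rv, tmul_sum, map_sum, map_sum]
    simp
  -- RHS
  have hR : ((μ ∘ₗ (cotrans σ).lTensor C).rTensor C ∘ₗ (DD C).rTensor C
        ∘ₗ (TensorProduct.assoc k C C C).symm.toLinearMap
        ∘ₗ (comul (R := k) (A := C)).lTensor C) (u ⊗ₜ[k] v)
      = ∑ j ∈ rv.index, ∑ i ∈ ru.index,
          μ (ru.left i ⊗ₜ[k] cotrans σ (ru.right i ⊗ₜ[k] rv.left j)) ⊗ₜ[k] rv.right j := by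
    simp only [comp_apply, lTensor_tmul]
    rw [← rv.eq, tmul_sum, map_sum, map_sum, map_sum]
    congr 1
    ext j
    simp only [LinearEquiv.coe_toLinearMap, TensorProduct.assoc_symm_tmul, rTensor_tmul]
    rw [DD_tmul u _ ru, map_sum, sum_tmul]
    simp
  rw [hL, hR]
  exact Finset.sum_comm

end GX

namespace GX
variable {μ : C ⊗[k] A →ₗ[k] C} {σ : C ⊗[k] C →ₗ[k] C ⊗[k] A}

lemma cotrans_cocanF (hσ : IsCocanInverse μ σ) : cotrans σ ∘ₗ cocanF μ = epsL A := by
  show (TensorProduct.lid k A).toLinearMap ∘ₗ (counit (R := k) (A := C)).rTensor A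
      ∘ₗ σ ∘ₗ cocanF μ = epsL A
  rw [hσ.2.1]
  rfl

lemma sigma_colinear (hσ : IsCocanInverse μ σ) :
    ∀ x ∈ cotensor μ, DD A (σ x) = σ.lTensor C (DD C x) := by
  intro x hx
  have h1 : cocanF μ (σ x) = x := hσ.2.2 x hx
  have h2 := LinearMap.congr_fun (cocanF_colinear μ) (σ x)
  simp only [comp_apply] at h2
  rw [h1] at h2
  calc DD A (σ x) = (σ ∘ₗ cocanF μ).lTensor C (DD A (σ x)) := by
        rw [hσ.2.1, lTensor_id, id_apply]
    _ = σ.lTensor C ((cocanF μ).lTensor C (DD A (σ x))) := by rw [lTensor_comp]; rfl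
    _ = σ.lTensor C (DD C x) := by rw [h2]

lemma L9 (hσ : IsCocanInverse μ σ) :
    ∀ x ∈ cotensor μ, μ ((cotrans σ).lTensor C (DD C x)) = μ (σ x) := by
  intro x hx
  have key : (cotrans σ).lTensor C (DD C x) = (epsL A).lTensor C (DD A (σ x)) := by
    have e : (cotrans σ).lTensor C = (epsL A).lTensor C ∘ₗ σ.lTensor C := by
      rw [← lTensor_comp]; rfl
    rw [e, comp_apply, ← sigma_colinear hσ x hx]
  have e := LinearMap.congr_fun (counit_DD (k := k) (C := C) (M := A)) (σ x)
  simp only [comp_apply, id_apply] at e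
  rw [key]
  exact congrArg μ e

lemma w_mem (hσ : IsCocanInverse μ σ) (t : C ⊗[k] A) :
    (TensorProduct.assoc k C C C).symm
        ((comul (R := k) (A := C)).lTensor C (cocanF μ t))
      ∈ LinearMap.range ((cotensor μ).subtype.rTensor C) := by
  have hexact : Function.Exact ((cotensor μ).subtype.rTensor C) ((cotensorEq μ).rTensor C) :=
    Module.Flat.rTensor_exact C (cotensorEq μ).exact_subtype_ker_map
  have hker : cotensorEq μ (cocanF μ t) = 0 := hσ.1 ⟨t, rfl⟩
  have h0 := LinearMap.congr_fun (cotensorEq_compat μ) (cocanF μ t)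
  simp only [comp_apply, hker, map_zero] at h0
  obtain ⟨z, hz⟩ := (hexact _).1 (by rw [← h0])
  exact ⟨z, hz⟩

lemma can_sigma_rT (hσ : IsCocanInverse μ σ) (z : ↥(cotensor μ) ⊗[k] C) :
    (cocanF μ).rTensor C (σ.rTensor C ((cotensor μ).subtype.rTensor C z))
      = (cotensor μ).subtype.rTensor C z := by
  induction z using TensorProduct.induction_on with
  | zero => simp
  | tmul x d =>
      simp only [rTensor_tmul, Submodule.coe_subtype]
      rw [hσ.2.2 x.1 x.2]
  | add a b ha hb => simp only [map_add, ha, hb]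

lemma B2 (hσ : IsCocanInverse μ σ) (z : ↥(cotensor μ) ⊗[k] C) :
    (μ ∘ₗ (cotrans σ).lTensor C).rTensor C
        ((DD C).rTensor C ((cotensor μ).subtype.rTensor C z))
      = μ.rTensor C (σ.rTensor C ((cotensor μ).subtype.rTensor C z)) := by
  induction z using TensorProduct.induction_on with
  | zero => simp
  | tmul x d =>
      simp only [rTensor_tmul, Submodule.coe_subtype, comp_apply]
      rw [L9 hσ x.1 x.2]
  | add a b ha hb => simp only [map_add, ha, hb]

end GX

namespace GX
variable {μ : C ⊗[k] A →ₗ[k] C} {σ : C ⊗[k] C →ₗ[k] C ⊗[k] A}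

theorem part1 (hσ : IsCocanInverse μ σ) :
    comul (R := k) (A := C) ∘ₗ μ
      = μ.rTensor C ∘ₗ (TensorProduct.assoc k C A C).symm.toLinearMap
        ∘ₗ (cocanPsi μ σ).lTensor C ∘ₗ (TensorProduct.assoc k C C A).toLinearMap
        ∘ₗ (comul (R := k) (A := C)).rTensor A := by
  apply TensorProduct.ext'
  intro c a
  set t : C ⊗[k] A := c ⊗ₜ[k] a with ht
  simp only [comp_apply]
  have hDD : (TensorProduct.assoc k C C A).toLinearMap ((comul (R := k)).rTensor A t)
      = DD A t := rfl
  rw [hDD]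
  have e1a : (cocanPsi μ σ).lTensor C (DD A t)
      = (PP σ).lTensor C ((cocanF μ).lTensor C (DD A t)) := by
    rw [cocanPsi_eq, lTensor_comp]; rfl
  have e1b := LinearMap.congr_fun (cocanF_colinear μ) t
  simp only [comp_apply] at e1b
  rw [e1a, e1b]
  have e2 := LinearMap.congr_fun (B1 μ σ) (cocanF μ t)
  simp only [comp_apply] at e2
  rw [e2]
  set w := (TensorProduct.assoc k C C C).symm.toLinearMap
      ((comul (R := k) (A := C)).lTensor C (cocanF μ t)) with hw
  obtain ⟨z, hz⟩ := w_mem hσ t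
  have hw' : w = (cotensor μ).subtype.rTensor C z := by
    rw [hw]; exact hz.symm
  have e3 : (μ ∘ₗ (cotrans σ).lTensor C).rTensor C ((DD C).rTensor C w)
      = μ.rTensor C (σ.rTensor C w) := by
    rw [hw']; exact B2 hσ z
  rw [e3]
  have l3 : μ.rTensor C (σ.rTensor C w) = (epsL C).rTensor C w := by
    rw [hw']
    calc μ.rTensor C (σ.rTensor C ((cotensor μ).subtype.rTensor C z))
        = (epsL C ∘ₗ cocanF μ).rTensor C (σ.rTensor C ((cotensor μ).subtype.rTensor C z)) := by
          rw [epsL_cocanF]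
      _ = (epsL C).rTensor C
            ((cocanF μ).rTensor C (σ.rTensor C ((cotensor μ).subtype.rTensor C z))) := by
          rw [rTensor_comp]; rfl
      _ = (epsL C).rTensor C ((cotensor μ).subtype.rTensor C z) := by rw [can_sigma_rT hσ z]
  rw [l3]
  have l2 := LinearMap.congr_fun counit_assoc_comul (cocanF μ t)
  simp only [comp_apply] at l2
  have l1 := LinearMap.congr_fun (epsL_cocanF μ) t
  simp only [comp_apply] at l1
  rw [hw, l2, l1]

end GX

namespace GX
variable {μ : C ⊗[k] A →ₗ[k] C} {σ : C ⊗[k] C →ₗ[k] C ⊗[k] A}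

lemma lam_sum (hσ : IsCocanInverse μ σ) (x : C) (r1 : Coalgebra.Repr k x (C × C)) (v : A ⊗[k] C) :
    ∑ j ∈ r1.index, (cotrans σ).rTensor C ((TensorProduct.assoc k C C C).symm
        (r1.left j ⊗ₜ[k] (μ.rTensor C ((TensorProduct.assoc k C A C).symm
          (r1.right j ⊗ₜ[k] v)))))
      = counit (R := k) x • v := by
  induction v using TensorProduct.induction_on with
  | zero => simp
  | tmul b e =>
      have hterm : ∀ j ∈ r1.index,
          (cotrans σ).rTensor C ((TensorProduct.assoc k C C C).symm
            (r1.left j ⊗ₜ[k] (μ.rTensor C ((TensorProduct.assoc k C A C).symm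
              (r1.right j ⊗ₜ[k] (b ⊗ₜ[k] e))))))
          = cotrans σ (r1.left j ⊗ₜ[k] μ (r1.right j ⊗ₜ[k] b)) ⊗ₜ[k] e := by
        intro j _
        simp
      rw [Finset.sum_congr rfl hterm, ← sum_tmul, ← map_sum, ← cocanF_tmul μ x b r1]
      have := LinearMap.congr_fun (cotrans_cocanF hσ) (x ⊗ₜ[k] b)
      simp only [comp_apply] at this
      rw [this, epsL_tmul]
      simp [smul_tmul']
  | add v v' hv hv' =>
      simp only [tmul_add, map_add, smul_add, ← hv, ← hv', Finset.sum_add_distrib]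

theorem part2 (hσ : IsCocanInverse μ σ) (ψ' : C ⊗[k] A →ₗ[k] A ⊗[k] C)
    (hM : comul (R := k) (A := C) ∘ₗ μ
      = μ.rTensor C ∘ₗ (TensorProduct.assoc k C A C).symm.toLinearMap
        ∘ₗ ψ'.lTensor C ∘ₗ (TensorProduct.assoc k C C A).toLinearMap
        ∘ₗ (comul (R := k) (A := C)).rTensor A) :
    ψ' = cocanPsi μ σ := by
  apply TensorProduct.ext'
  intro c a
  set r := ℛ k c with hr
  -- expand cocanPsi
  have step1 : cocanPsi μ σ (c ⊗ₜ[k] a)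
      = ∑ i ∈ r.index, (cotrans σ).rTensor C ((TensorProduct.assoc k C C C).symm
          (r.left i ⊗ₜ[k] comul (R := k) (μ (r.right i ⊗ₜ[k] a)))) := by
    rw [cocanPsi_eq, comp_apply, cocanF_tmul μ c a r, map_sum]
    simp [PP, comp_apply, lTensor_tmul]
  have hM' : ∀ i, comul (R := k) (μ (r.right i ⊗ₜ[k] a))
      = μ.rTensor C ((TensorProduct.assoc k C A C).symm
          (ψ'.lTensor C (DD A (r.right i ⊗ₜ[k] a)))) := by
    intro i
    have := LinearMap.congr_fun hM (r.right i ⊗ₜ[k] a)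
    exact this
  have step2 : cocanPsi μ σ (c ⊗ₜ[k] a)
      = ∑ i ∈ r.index, ∑ j ∈ (ℛ k (r.right i)).index,
          (cotrans σ).rTensor C ((TensorProduct.assoc k C C C).symm
            (r.left i ⊗ₜ[k] (μ.rTensor C ((TensorProduct.assoc k C A C).symm
              ((ℛ k (r.right i)).left j ⊗ₜ[k] ψ' ((ℛ k (r.right i)).right j ⊗ₜ[k] a)))))) := by
    rw [step1]
    congr 1
    ext i
    rw [hM' i, DD_tmul _ a (ℛ k (r.right i)), map_sum]
    simp only [lTensor_tmul]
    rw [map_sum, map_sum, tmul_sum, map_sum, map_sum]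
  -- use coassociativity to switch the representations
  set Ξ : C ⊗[k] (C ⊗[k] C) →ₗ[k] A ⊗[k] C :=
    (cotrans σ).rTensor C ∘ₗ (TensorProduct.assoc k C C C).symm.toLinearMap
      ∘ₗ (μ.rTensor C).lTensor C
      ∘ₗ ((TensorProduct.assoc k C A C).symm.toLinearMap).lTensor C
      ∘ₗ ((ψ' ∘ₗ (TensorProduct.mk k C A).flip a).lTensor C).lTensor C with hΞ
  have hΞt : ∀ (x y z : C), Ξ (x ⊗ₜ[k] (y ⊗ₜ[k] z))
      = (cotrans σ).rTensor C ((TensorProduct.assoc k C C C).symm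
          (x ⊗ₜ[k] (μ.rTensor C ((TensorProduct.assoc k C A C).symm
            (y ⊗ₜ[k] ψ' (z ⊗ₜ[k] a)))))) := by
    intro x y z
    simp [hΞ, comp_apply, lTensor_tmul]
  have key := Coalgebra.sum_tmul_tmul_eq (R := k) r
    (fun i => ℛ k (r.left i)) (fun i => ℛ k (r.right i))
  have key2 := congrArg Ξ key
  simp only [map_sum, hΞt] at key2
  have step3 : cocanPsi μ σ (c ⊗ₜ[k] a)
      = ∑ i ∈ r.index, ∑ j ∈ (ℛ k (r.left i)).index,
          (cotrans σ).rTensor C ((TensorProduct.assoc k C C C).symm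
            ((ℛ k (r.left i)).left j ⊗ₜ[k] (μ.rTensor C ((TensorProduct.assoc k C A C).symm
              ((ℛ k (r.left i)).right j ⊗ₜ[k] ψ' (r.right i ⊗ₜ[k] a)))))) := by
    rw [step2, ← key2]
  -- collapse with the counit
  have step4 : cocanPsi μ σ (c ⊗ₜ[k] a)
      = ∑ i ∈ r.index, counit (R := k) (r.left i) • ψ' (r.right i ⊗ₜ[k] a) := by
    rw [step3]
    congr 1
    ext i
    exact lam_sum hσ (r.left i) (ℛ k (r.left i)) (ψ' (r.right i ⊗ₜ[k] a))
  rw [step4]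
  have : ∑ i ∈ r.index, counit (R := k) (r.left i) • ψ' (r.right i ⊗ₜ[k] a)
      = ψ' ((∑ i ∈ r.index, counit (R := k) (r.left i) • r.right i) ⊗ₜ[k] a) := by
    rw [sum_tmul, map_sum]
    simp [← smul_tmul']
  rw [this, counit_smul_left c r]

end GX


/-- for an `A`-Galois coextension `C ↠ B` with canonical entwining
map `ψ`, `C ∈ M_A^C(ψ)`, i.e. `Δ ∘ μ_C = (μ_C ⊗ C) ∘ (C ⊗ ψ) ∘ (Δ ⊗ A)`; moreover
`ψ` is the unique entwining map with this property. -/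
theorem cocanPsi_module_and_unique (μ : C ⊗[k] A →ₗ[k] C) (hμ : IsAction μ)
    (σ : C ⊗[k] C →ₗ[k] C ⊗[k] A) (hσ : IsCocanInverse μ σ) :
    (comul (R := k) (A := C) ∘ₗ μ
      = μ.rTensor C ∘ₗ (TensorProduct.assoc k C A C).symm.toLinearMap
        ∘ₗ (cocanPsi μ σ).lTensor C ∘ₗ (TensorProduct.assoc k C C A).toLinearMap
        ∘ₗ (comul (R := k) (A := C)).rTensor A)
    ∧ (∀ ψ' : C ⊗[k] A →ₗ[k] A ⊗[k] C, IsEntwining ψ' →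
        (comul (R := k) (A := C) ∘ₗ μ
          = μ.rTensor C ∘ₗ (TensorProduct.assoc k C A C).symm.toLinearMap
            ∘ₗ ψ'.lTensor C ∘ₗ (TensorProduct.assoc k C C A).toLinearMap
            ∘ₗ (comul (R := k) (A := C)).rTensor A) →
        ψ' = cocanPsi μ σ) := by
  exact ⟨GX.part1 hσ, fun ψ' _ hM => GX.part2 hσ ψ' hM⟩
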